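/- arXiv:2104.06586 — 2 statements merged into one kernel-verified Lean document; each statement's English description precedes it below -/
import Mathlib

section
/- Let $A$ be a $\mathbb{Z}$-graded commutative ring. Then the following are equivalent: (1) $A$ is a Noetherian ring; (2) every homogeneous (graded) ideal of $A$ is finitely generated; (3) $A_0$ is Noetherian and both $A_{\geq 0}$ and $A_{\leq 0}$ are finitely generated $A_0$-algebras; (4) $A_0$ is Noetherian and $A$ is a finitely generated $A_0$-algebra. -/
open DirectSum

section Aux

variable {A : Type*} [CommRing A] (𝒜 : ℤ → AddSubgroup A) [GradedRing 𝒜]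

/-- A finitely generated span admits a finite generating subset of any generating set. -/
lemma aux_exists_finset_span (S : Set A) (h : (Ideal.span S).FG) :
    ∃ T : Finset A, ↑T ⊆ S ∧ Ideal.span (T : Set A) = Ideal.span S := by
  classical
  obtain ⟨G, hG⟩ := h
  have hmem : ∀ g ∈ G, ∃ T : Finset A, ↑T ⊆ S ∧ g ∈ Ideal.span (T : Set A) := by
    intro g hg
    have : g ∈ Ideal.span S := by
      rw [← hG]; exact Ideal.subset_span hg
    obtain ⟨T, hT1, hT2⟩ := Submodule.mem_span_finite_of_mem_span this
    exact ⟨T, hT1, hT2⟩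
  choose! Tg hTg1 hTg2 using hmem
  refine ⟨G.biUnion Tg, ?_, ?_⟩
  · intro x hx
    simp only [Finset.coe_biUnion, Set.mem_iUnion] at hx
    obtain ⟨g, hg, hx⟩ := hx
    exact hTg1 g hg hx
  · refine le_antisymm (Ideal.span_mono ?_) ?_
    · intro x hx
      simp only [Finset.coe_biUnion, Set.mem_iUnion] at hx
      obtain ⟨g, hg, hx⟩ := hx
      exact hTg1 g hg hx
    · rw [← hG, Ideal.span_le]
      intro g hg
      exact Ideal.span_mono (by
        intro x hx
        simp only [Finset.coe_biUnion, Set.mem_iUnion]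
        exact ⟨g, hg, hx⟩) (hTg2 g hg)

/-- Extraction of homogeneous components of a span membership. -/
lemma aux_extraction {T : Set A} {d : A → ℤ} (hT : ∀ t ∈ T, t ∈ 𝒜 (d t)) {n : ℤ} {a : A}
    (ha : a ∈ 𝒜 n) (hs : a ∈ Ideal.span T) :
    ∃ c : A →₀ A, ↑c.support ⊆ T ∧
      a = c.sum fun t r => (DirectSum.decompose 𝒜 r (n - d t) : A) * t := by
  obtain ⟨c, hc, hsum⟩ := Submodule.mem_span_set.mp hs
  refine ⟨c, hc, ?_⟩
  have h1 : a = GradedRing.proj 𝒜 n a := by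
    rw [GradedRing.proj_apply, DirectSum.decompose_of_mem_same 𝒜 ha]
  rw [h1]
  conv_lhs => rw [← hsum]
  rw [map_finsuppSum]
  refine Finsupp.sum_congr fun t ht => ?_
  have htT : t ∈ T := hc ht
  have h2 := DirectSum.coe_decompose_mul_add_of_right_mem 𝒜 (hT t htT)
    (a := c t) (i := n - d t)
  rw [sub_add_cancel] at h2
  rw [smul_eq_mul, GradedRing.proj_apply, h2]

/-- Each graded piece is "finitely generated over 𝒜 0" if homogeneous ideals are fg. -/
lemma aux_piece (h2 : ∀ I : Ideal A, I.IsHomogeneous 𝒜 → I.FG) (n : ℤ) :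
    ∃ F : Finset A, ↑F ⊆ (𝒜 n : Set A) ∧
      ∀ B : Subring A, (𝒜 0 : Set A) ⊆ B → ↑F ⊆ (B : Set A) → (𝒜 n : Set A) ⊆ B := by
  have hJ : Ideal.IsHomogeneous 𝒜 (Ideal.span (𝒜 n : Set A)) :=
    Ideal.homogeneous_span 𝒜 _ fun x hx => ⟨n, hx⟩
  obtain ⟨T, hTS, hTspan⟩ := aux_exists_finset_span (𝒜 n : Set A) (h2 _ hJ)
  refine ⟨T, hTS, fun B h0 hTB a ha => ?_⟩
  have haspan : a ∈ Ideal.span (T : Set A) := by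
    rw [hTspan]; exact Ideal.subset_span ha
  have hT' : ∀ t ∈ (T : Set A), t ∈ 𝒜 ((fun _ => n) t) := fun t ht => hTS ht
  obtain ⟨c, hcs, hce⟩ := aux_extraction 𝒜 hT' ha haspan
  rw [hce, Finsupp.sum]
  refine Subring.sum_mem B fun t ht => ?_
  exact B.mul_mem (h0 (by simpa using SetLike.coe_mem (DirectSum.decompose 𝒜 (c t) (n - n))))
    (hTB (hcs ht))

/-- `𝒜 0` as a subring of `A`. -/
def gradeZeroSubring : Subring A where
  carrier := 𝒜 0
  add_mem' := fun h h' => add_mem h h'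
  zero_mem' := zero_mem _
  neg_mem' := fun h => neg_mem h
  one_mem' := SetLike.one_mem_graded 𝒜
  mul_mem' := fun {a b} ha hb => by simpa using SetLike.mul_mem_graded ha hb

lemma closure_gradeZero : Subring.closure (𝒜 0 : Set A) = gradeZeroSubring 𝒜 :=
  le_antisymm (Subring.closure_le.2 fun x hx => hx) Subring.subset_closure

/-- If homogeneous ideals are fg, the degree-zero subring is Noetherian. -/
lemma aux_noetherian_gradeZero (h2 : ∀ I : Ideal A, I.IsHomogeneous 𝒜 → I.FG) :
    IsNoetherianRing (Subring.closure (𝒜 0 : Set A)) := by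
  rw [closure_gradeZero]
  rw [isNoetherianRing_iff_ideal_fg]
  classical
  set R0 := gradeZeroSubring 𝒜 with hR0
  intro I
  set S : Set A := Subtype.val '' (I : Set R0) with hS
  have hJ : Ideal.IsHomogeneous 𝒜 (Ideal.span S) := by
    refine Ideal.homogeneous_span 𝒜 _ fun x hx => ?_
    obtain ⟨y, _, rfl⟩ := hx
    exact ⟨0, y.2⟩
  obtain ⟨T, hTS, hTspan⟩ := aux_exists_finset_span S (h2 _ hJ)
  have hT0 : ∀ t ∈ (T : Set A), t ∈ 𝒜 ((fun _ => (0:ℤ)) t) := by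
    intro t ht
    obtain ⟨y, _, rfl⟩ := hTS ht
    exact y.2
  refine Submodule.fg_def.mpr ⟨Subtype.val ⁻¹' (T : Set A),
    Set.Finite.preimage Subtype.val_injective.injOn T.finite_toSet, le_antisymm ?_ ?_⟩
  · rw [Submodule.span_le]
    intro x hx
    obtain ⟨y, hyI, hyx⟩ := hTS hx
    exact (Subtype.val_injective hyx : y = x) ▸ hyI
  · intro a haI
    have h1 : (a : A) ∈ Ideal.span (T : Set A) := by
      rw [hTspan]
      exact Ideal.subset_span ⟨a, haI, rfl⟩
    obtain ⟨c, hcs, hce⟩ := aux_extraction 𝒜 hT0 a.2 h1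
    have hmem : (a : A) ∈ Submodule.span R0 (T : Set A) := by
      rw [hce, Finsupp.sum]
      refine Submodule.sum_mem _ fun t ht => ?_
      have hdm : (DirectSum.decompose 𝒜 (c t) ((0:ℤ) - 0) : A) ∈ R0 := by
        have h := SetLike.coe_mem (DirectSum.decompose 𝒜 (c t) ((0:ℤ) - 0))
        simp only [sub_self] at h ⊢
        exact h
      have : (DirectSum.decompose 𝒜 (c t) ((0:ℤ) - 0) : A) * t
          = (⟨_, hdm⟩ : R0) • t := rfl
      rw [this]
      exact Submodule.smul_mem _ _ (Submodule.subset_span (hcs ht))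
    have himg : Subtype.val '' (Subtype.val ⁻¹' (T : Set A) : Set R0) = (T : Set A) := by
      rw [Set.image_preimage_eq_inter_range, Subtype.range_coe_subtype]
      refine Set.inter_eq_self_of_subset_left fun t ht => ?_
      exact hT0 t ht
    let φ : R0 →ₗ[R0] A := Algebra.linearMap R0 A
    have hφ : ∀ x : R0, φ x = (x : A) := fun x => rfl
    have hmap : Submodule.map φ (Submodule.span R0 (Subtype.val ⁻¹' (T : Set A)))
        = Submodule.span R0 (T : Set A) := by
      rw [Submodule.map_span,
        show ⇑φ '' (Subtype.val ⁻¹' (T : Set A)) = Subtype.val '' (Subtype.val ⁻¹' (T : Set A))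
          from rfl, himg]
    rw [← hmap] at hmem
    obtain ⟨b, hb, hba⟩ := hmem
    have : b = a := Subtype.val_injective hba
    exact this ▸ hb

/-- The engine: the one-sided pieces along `σ·ℕ` are contained in a finitely generated
subring over `𝒜 0`. -/
lemma aux_engine (h2 : ∀ I : Ideal A, I.IsHomogeneous 𝒜 → I.FG) (σ : ℤ) :
    ∃ s : Finset A, (∀ t ∈ s, ∃ n : ℕ, t ∈ 𝒜 (σ * n)) ∧
      ∀ n : ℕ, (𝒜 (σ * n) : Set A) ⊆ Subring.closure ((𝒜 0 : Set A) ∪ s) := by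
  classical
  set U : Set A := ⋃ n : ℕ, ⋃ _ : 0 < n, (𝒜 (σ * n) : Set A) with hUdef
  have hU : Ideal.IsHomogeneous 𝒜 (Ideal.span U) := by
    refine Ideal.homogeneous_span 𝒜 _ fun x hx => ?_
    simp only [hUdef, Set.mem_iUnion] at hx
    obtain ⟨n, _, h⟩ := hx
    exact ⟨_, h⟩
  obtain ⟨T, hTU, hTspan⟩ := aux_exists_finset_span U (h2 _ hU)
  have hdeg : ∀ t ∈ (T : Set A), ∃ n : ℕ, 0 < n ∧ t ∈ 𝒜 (σ * n) := by
    intro t ht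
    have := hTU ht
    simp only [hUdef, Set.mem_iUnion] at this
    obtain ⟨n, hn, h⟩ := this
    exact ⟨n, hn, h⟩
  choose! dfun hd1 hd2 using hdeg
  set D : ℕ := T.sup dfun + 1 with hDdef
  choose Ffun hF1 hF2 using fun k : ℕ => aux_piece 𝒜 h2 (σ * k)
  set s : Finset A := T ∪ (Finset.range D).biUnion Ffun with hsdef
  have hhom : ∀ t ∈ s, ∃ n : ℕ, t ∈ 𝒜 (σ * n) := by
    intro t ht
    rcases Finset.mem_union.mp ht with h | h
    · exact ⟨dfun t, hd2 t (by exact_mod_cast h)⟩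
    · obtain ⟨k, _, htk⟩ := Finset.mem_biUnion.mp h
      exact ⟨k, hF1 k htk⟩
  refine ⟨s, hhom, ?_⟩
  set B := Subring.closure ((𝒜 0 : Set A) ∪ s) with hBdef
  have hsB : (s : Set A) ⊆ B := fun x hx => Subring.subset_closure (Set.mem_union_right _ hx)
  have h0B : (𝒜 0 : Set A) ⊆ B := fun x hx => Subring.subset_closure (Set.mem_union_left _ hx)
  intro n
  induction n using Nat.strong_induction_on with
  | _ n IH =>
    intro a ha
    rcases Nat.eq_zero_or_pos n with hn0 | hn0
    · subst hn0
      exact h0B (by simpa using ha)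
    by_cases hnD : n < D
    · refine hF2 n B h0B ?_ ha
      intro x hx
      exact hsB (by
        refine Finset.mem_coe.mpr (Finset.mem_union_right _ ?_)
        exact Finset.mem_biUnion.mpr ⟨n, Finset.mem_range.mpr hnD, hx⟩)
    · push_neg at hnD
      have haU : a ∈ Ideal.span U := by
        refine Ideal.subset_span ?_
        simp only [hUdef, Set.mem_iUnion]
        exact ⟨n, hn0, ha⟩
      rw [← hTspan] at haU
      have hT' : ∀ t ∈ (T : Set A), t ∈ 𝒜 ((fun t => σ * (dfun t : ℤ)) t) :=
        fun t ht => hd2 t ht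
      obtain ⟨c, hcs, hce⟩ := aux_extraction 𝒜 hT' ha haU
      rw [hce, Finsupp.sum]
      refine Subring.sum_mem B fun t ht => ?_
      have htT : t ∈ (T : Set A) := hcs ht
      have hdt : 0 < dfun t := hd1 t htT
      have hdtD : dfun t ≤ T.sup dfun := Finset.le_sup (by exact_mod_cast htT)
      have hdtn : dfun t ≤ n := le_trans (le_trans hdtD (Nat.le_succ _)) hnD
      have hlt : n - dfun t < n := Nat.sub_lt hn0 hdt
      have key : σ * (n : ℤ) - σ * (dfun t : ℤ) = σ * ((n - dfun t : ℕ) : ℤ) := by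
        have hcast : ((n - dfun t : ℕ) : ℤ) = (n : ℤ) - (dfun t : ℤ) := by
          exact_mod_cast Int.ofNat_sub hdtn
        rw [hcast]; ring
      have hmem : (DirectSum.decompose 𝒜 (c t) (σ * (n : ℤ) - σ * (dfun t : ℤ)) : A)
          ∈ 𝒜 (σ * ((n - dfun t : ℕ) : ℤ)) := by
        rw [← key]
        exact SetLike.coe_mem _
      exact B.mul_mem (IH _ hlt hmem)
        (hsB (Finset.mem_coe.mpr (Finset.mem_union_left _ (by exact_mod_cast htT))))

end Aux

/- STATEMENT 0: For a ℤ-graded commutative ring `A` the following are equivalent: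
(1) `A` is Noetherian;
(2) every homogeneous (graded) ideal of `A` is finitely generated;
(3) `A₀` is Noetherian and both `A_{≥0}` and `A_{≤0}` are finitely generated `A₀`-algebras;
(4) `A₀` is Noetherian and `A` is a finitely generated `A₀`-algebra.
Here `A₀`, `A_{≥0}`, `A_{≤0}` are realized as the subrings of `A` generated by the
corresponding graded pieces (these generating sets are already closed under multiplication,
so the closures coincide with the usual direct sums), and "finitely generated `A₀`-algebra"
means: generated as a ring by `A₀` together with finitely many elements. -/

theorem noetherian_Z_graded_ring_tfae
    {A : Type*} [CommRing A] (𝒜 : ℤ → AddSubgroup A) [GradedRing 𝒜] :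
    List.TFAE
      [ IsNoetherianRing A,
        ∀ I : Ideal A, I.IsHomogeneous 𝒜 → I.FG,
        IsNoetherianRing (Subring.closure (𝒜 0 : Set A)) ∧
          (∃ s : Finset A,
            Subring.closure ((𝒜 0 : Set A) ∪ s) =
              Subring.closure (⋃ (i : ℤ) (_ : 0 ≤ i), (𝒜 i : Set A))) ∧
          (∃ s : Finset A,
            Subring.closure ((𝒜 0 : Set A) ∪ s) =
              Subring.closure (⋃ (i : ℤ) (_ : i ≤ 0), (𝒜 i : Set A))),
        IsNoetherianRing (Subring.closure (𝒜 0 : Set A)) ∧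
          ∃ s : Finset A, Subring.closure ((𝒜 0 : Set A) ∪ s) = ⊤ ] := by
  tfae_have 1 → 2 := fun h I _ => (isNoetherianRing_iff_ideal_fg A).mp h I
  tfae_have 2 → 3 := by
    intro h2
    refine ⟨aux_noetherian_gradeZero 𝒜 h2, ?_, ?_⟩
    · obtain ⟨s, hhom, hcl⟩ := aux_engine 𝒜 h2 1
      refine ⟨s, le_antisymm (Subring.closure_le.2 ?_) (Subring.closure_le.2 ?_)⟩
      · rintro x (hx | hx)
        · exact Subring.subset_closure (Set.mem_iUnion.mpr ⟨0, Set.mem_iUnion.mpr ⟨le_refl 0, hx⟩⟩)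
        · obtain ⟨n, hn⟩ := hhom x hx
          refine Subring.subset_closure (Set.mem_iUnion.mpr ⟨(n : ℤ),
            Set.mem_iUnion.mpr ⟨Int.ofNat_nonneg n, by simpa using hn⟩⟩)
      · intro x hx
        simp only [Set.mem_iUnion] at hx
        obtain ⟨i, hi, hxi⟩ := hx
        have := hcl i.toNat (by
          rw [show ((1:ℤ) * (i.toNat : ℤ)) = i by simp [Int.toNat_of_nonneg hi]]
          exact hxi)
        exact this
    · obtain ⟨s, hhom, hcl⟩ := aux_engine 𝒜 h2 (-1)
      refine ⟨s, le_antisymm (Subring.closure_le.2 ?_) (Subring.closure_le.2 ?_)⟩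
      · rintro x (hx | hx)
        · exact Subring.subset_closure (Set.mem_iUnion.mpr ⟨0, Set.mem_iUnion.mpr ⟨le_refl 0, hx⟩⟩)
        · obtain ⟨n, hn⟩ := hhom x hx
          refine Subring.subset_closure (Set.mem_iUnion.mpr ⟨(-1 : ℤ) * n,
            Set.mem_iUnion.mpr ⟨by omega, hn⟩⟩)
      · intro x hx
        simp only [Set.mem_iUnion] at hx
        obtain ⟨i, hi, hxi⟩ := hx
        have := hcl (-i).toNat (by
          rw [show ((-1:ℤ) * ((-i).toNat : ℤ)) = i by
            rw [Int.toNat_of_nonneg (by omega)]; ring]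
          exact hxi)
        exact this
  tfae_have 3 → 4 := by
    classical
    rintro ⟨hN, ⟨s, hs⟩, ⟨t, ht⟩⟩
    refine ⟨hN, s ∪ t, ?_⟩
    rw [eq_top_iff]
    intro a _
    rw [← DirectSum.sum_support_decompose 𝒜 a]
    refine Subring.sum_mem _ fun i _ => ?_
    have hx : (DirectSum.decompose 𝒜 a i : A) ∈ 𝒜 i := SetLike.coe_mem _
    have hmono : ∀ u : Finset A, (u : Set A) ⊆ ((s ∪ t : Finset A) : Set A) →
        Subring.closure ((𝒜 0 : Set A) ∪ u) ≤
          Subring.closure ((𝒜 0 : Set A) ∪ (s ∪ t : Finset A)) := by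
      intro u hu
      exact Subring.closure_mono (Set.union_subset_union (le_refl _) hu)
    rcases le_or_gt 0 i with hi | hi
    · have : (DirectSum.decompose 𝒜 a i : A) ∈
          Subring.closure (⋃ (j : ℤ) (_ : 0 ≤ j), (𝒜 j : Set A)) :=
        Subring.subset_closure (Set.mem_iUnion.mpr ⟨i, Set.mem_iUnion.mpr ⟨hi, hx⟩⟩)
      rw [← hs] at this
      exact hmono s (by simp [Finset.coe_union]) this
    · have : (DirectSum.decompose 𝒜 a i : A) ∈
          Subring.closure (⋃ (j : ℤ) (_ : j ≤ 0), (𝒜 j : Set A)) :=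
        Subring.subset_closure (Set.mem_iUnion.mpr ⟨i, Set.mem_iUnion.mpr ⟨le_of_lt hi, hx⟩⟩)
      rw [← ht] at this
      exact hmono t (by simp [Finset.coe_union]) this
  tfae_have 4 → 1 := by
    rintro ⟨hN, s, hs⟩
    set R0 : Subring A := Subring.closure (𝒜 0 : Set A) with hR0
    haveI : IsNoetherianRing R0 := hN
    have hadj : Algebra.adjoin R0 (s : Set A) = ⊤ := by
      have h1 : (Algebra.adjoin R0 (s : Set A)).toSubring =
          Subring.closure (Set.range (algebraMap R0 A) ∪ s) :=
        Algebra.adjoin_eq_ring_closure _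
      have h2 : Set.range (algebraMap R0 A) = (R0 : Set A) := Subtype.range_coe
      have h3 : Subring.closure ((R0 : Set A) ∪ s) = Subring.closure ((𝒜 0 : Set A) ∪ s) := by
        refine le_antisymm (Subring.closure_le.2 ?_) (Subring.closure_mono ?_)
        · refine Set.union_subset ?_ (fun x hx => Subring.subset_closure (Set.mem_union_right _ hx))
          rw [hR0]
          exact Subring.closure_le.2 fun x hx => Subring.subset_closure (Set.mem_union_left _ hx)
        · exact Set.union_subset_union Subring.subset_closure (le_refl _)
      have : (Algebra.adjoin R0 (s : Set A)).toSubring = ⊤ := by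
        rw [h1, h2, h3, hs]
      apply Subalgebra.toSubring_injective
      rw [this]; rfl
    haveI : Algebra.FiniteType R0 A := ⟨⟨s, hadj⟩⟩
    exact Algebra.FiniteType.isNoetherianRing R0 A
  tfae_finish
end

section
/- Let $A$ be a $\mathbb{Z}$-graded commutative ring and let $f \in A_d$ be a homogeneous element of degree $d > 0$. Then the natural map of localizations $(A_{\geq 0})_f \to A_f$ is an isomorphism, where $A_{\geq 0} = \bigoplus_{i \geq 0} A_i$ is viewed as a subring of $A$. -/
/- STATEMENT 1: For a ℤ-graded commutative ring `A` and a homogeneous element `f` of degree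
`d > 0`, the natural map `(A_{≥0})_f → A_f` induced by the inclusion `A_{≥0} ⊆ A` is an
isomorphism.  Here `A_{≥0}` is realized as the subring of `A` generated by the graded pieces
of non-negative degree (which coincides with `⊕_{i≥0} A_i`). -/

theorem localization_nonneg_part_at_positive_degree_element_bijective
    {A : Type*} [CommRing A] (𝒜 : ℤ → AddSubgroup A) [GradedRing 𝒜]
    (d : ℤ) (hd : 0 < d) (f : A) (hf : f ∈ 𝒜 d)
    (hf' : f ∈ Subring.closure (⋃ (i : ℤ) (_ : 0 ≤ i), (𝒜 i : Set A))) :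
    Function.Bijective
      (Localization.awayLift
        ((algebraMap A (Localization.Away f)).comp
          (Subring.closure (⋃ (i : ℤ) (_ : 0 ≤ i), (𝒜 i : Set A))).subtype)
        (⟨f, hf'⟩ : Subring.closure (⋃ (i : ℤ) (_ : 0 ≤ i), (𝒜 i : Set A)))
        (IsLocalization.map_units (M := Submonoid.powers f) (Localization.Away f)
          ⟨f, Submonoid.mem_powers f⟩)) := by
  classical
  set S := Subring.closure (⋃ (i : ℤ) (_ : 0 ≤ i), (𝒜 i : Set A)) with hSdef
  have hmem : ∀ (i : ℤ), 0 ≤ i → ∀ a ∈ 𝒜 i, a ∈ S := fun i hi a ha =>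
    Subring.subset_closure (Set.mem_iUnion.2 ⟨i, Set.mem_iUnion.2 ⟨hi, ha⟩⟩)
  have key : ∀ x : A, ∃ k : ℕ, x * f ^ k ∈ S := by
    intro x
    refine ⟨(DirectSum.decompose 𝒜 x).support.sup (fun i => (-i).toNat), ?_⟩
    set k := (DirectSum.decompose 𝒜 x).support.sup (fun i => (-i).toNat) with hk
    have hx : x * f ^ k = ∑ i ∈ (DirectSum.decompose 𝒜 x).support,
        (DirectSum.decompose 𝒜 x i : A) * f ^ k := by
      rw [← Finset.sum_mul, DirectSum.sum_support_decompose]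
    rw [hx]
    refine Subring.sum_mem _ (fun i hi => ?_)
    refine hmem (i + k • d) ?_ _
      (SetLike.mul_mem_graded (DirectSum.decompose 𝒜 x i).2 (SetLike.pow_mem_graded _ hf))
    have h1 : (-i) ≤ (k : ℤ) := by
      refine le_trans (Int.self_le_toNat _) ?_
      exact_mod_cast Finset.le_sup (f := fun i => (-i).toNat) hi
    have h2 : (k : ℤ) ≤ (k : ℤ) * d := le_mul_of_one_le_right (Int.natCast_nonneg k) hd
    have : k • d = (k : ℤ) * d := nsmul_eq_mul k d
    rw [this]
    linarith
  letI : Algebra S (Localization.Away f) :=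
    ((algebraMap A (Localization.Away f)).comp S.subtype).toAlgebra
  have halg : ∀ a : S, algebraMap S (Localization.Away f) a = algebraMap A (Localization.Away f) (a : A) :=
    fun a => rfl
  haveI isLoc : IsLocalization (Submonoid.powers ((⟨f, hf'⟩ : S))) (Localization.Away f) := by
    refine ⟨⟨?_, ?_, ?_⟩⟩
    · rintro ⟨y, n, rfl⟩
      have : (algebraMap S (Localization.Away f)) ((⟨f, hf'⟩ : S) ^ n)
          = algebraMap A (Localization.Away f) (f ^ n) := by
        rw [halg]; norm_num
      rw [this]
      exact IsLocalization.map_units (M := Submonoid.powers f) _ ⟨f ^ n, n, rfl⟩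
    · intro z
      obtain ⟨⟨x, s⟩, h⟩ := IsLocalization.surj (Submonoid.powers f) z
      obtain ⟨n, hn⟩ := s.2
      obtain ⟨k, hk⟩ := key x
      refine ⟨⟨⟨x * f ^ k, hk⟩, ⟨(⟨f, hf'⟩ : S) ^ (n + k), n + k, rfl⟩⟩, ?_⟩
      simp only [halg]
      have hs : (s : A) = f ^ n := hn.symm
      have hcoe : (((⟨f, hf'⟩ : S) ^ (n + k) : S) : A) = f ^ (n + k) := by norm_num
      rw [hs] at h
      rw [hcoe, pow_add, map_mul, ← mul_assoc, h, ← map_mul]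
    · intro a b h
      rw [halg, halg] at h
      obtain ⟨c, hc⟩ := (IsLocalization.eq_iff_exists (Submonoid.powers f) (Localization.Away f)).mp h
      obtain ⟨n, hn⟩ := c.2
      refine ⟨⟨(⟨f, hf'⟩ : S) ^ n, n, rfl⟩, ?_⟩
      ext
      push_cast
      simpa [← hn] using hc
  set g := ((algebraMap A (Localization.Away f)).comp S.subtype) with hg
  have hgalg : g = algebraMap S (Localization.Away f) := rfl
  set e := IsLocalization.algEquiv (Submonoid.powers ((⟨f, hf'⟩ : S)))
    (Localization.Away ((⟨f, hf'⟩ : S))) (Localization.Away f) with he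
  have heq : (Localization.awayLift g (⟨f, hf'⟩ : S)
      (IsLocalization.map_units (M := Submonoid.powers f) (Localization.Away f)
        ⟨f, Submonoid.mem_powers f⟩)) = (e : Localization.Away ((⟨f, hf'⟩ : S)) →+* Localization.Away f) := by
    apply IsLocalization.ringHom_ext (Submonoid.powers ((⟨f, hf'⟩ : S)))
    ext a
    simp only [RingHom.coe_comp, Function.comp_apply]
    unfold Localization.awayLift
    erw [IsLocalization.Away.lift_eq]
  rw [heq]
  exact e.bijective
end
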